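/- Uniform splitting preserves feasibility and objective value: let z ∈ ℝ^{V̄'} be feasible for the reduced LP (D2), i.e. z_{v̄} ≥ 0 for all v̄ ∈ V̄', Σ_{v̄} z_{v̄} = 1, Σ_{v̄} z_{v̄}(a_i'·v̄) ≤ b_i for all i ∈ I, and Σ_{v̄} z_{v̄}(c_j'·v̄) = d_j for all j ∈ J. Define y_v = z_{v̄}/n(v̄) for each v ∈ v̄, where n(v̄) is the number of vertices in the class v̄. Then y is feasible for the primal LP (D1): y_v ≥ 0, Σ_{v∈V'} y_v = 1, a_i'·Σ_{v∈V'} y_v v ≤ b_i for all i ∈ I, c_j'·Σ_{v∈V'} y_v v = d_j for all j ∈ J, and e_{k,l}·Σ_{v∈V'} y_v v = 0 for all k ∈ {1,…,n} and l ∈ {1,…,δ_k−1}; moreover Σ_{v∈V'} y_v q(v) = Σ_{v̄∈V̄'} z_{v̄} q(v̄). -/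

import Mathlib

open Finset

/-- The normalized elementary symmetric polynomial
`B_{l,δ}(z) = binom(δ,l)⁻¹ ∑_{1≤σ₁<⋯<σ_l≤δ} z_{σ₁}⋯z_{σ_l}`. -/
noncomputable def normEsymm (δ l : ℕ) (z : Fin δ → ℝ) : ℝ :=
  ((δ.choose l : ℝ))⁻¹ * ∑ s ∈ Finset.powersetCard l (Finset.univ : Finset (Fin δ)),
    ∏ i ∈ s, z i

/-- The polynomial `p(x) = ∑_{l ∈ Δ} c_l x₁^{l₁}⋯x_n^{l_n}` with coefficients `c`,
where `Δ = {0,…,δ₁} × ⋯ × {0,…,δ_n}`. -/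
noncomputable def polyOf {n : ℕ} {δ : Fin n → ℕ} (c : (∀ k, Fin (δ k + 1)) → ℝ)
    (x : Fin n → ℝ) : ℝ :=
  ∑ l : ∀ k, Fin (δ k + 1), c l * ∏ k, x k ^ (l k : ℕ)

/-- The blossom `q(z) = ∑_{l ∈ Δ} c_l ∏_k B_{l_k,δ_k}(z_{k,1},…,z_{k,δ_k})` of the
polynomial with coefficients `c`. -/
noncomputable def blossomOf {n : ℕ} {δ : Fin n → ℕ} (c : (∀ k, Fin (δ k + 1)) → ℝ)
    (z : ∀ k, Fin (δ k) → ℝ) : ℝ :=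
  ∑ l : ∀ k, Fin (δ k + 1), c l * ∏ k, normEsymm (δ k) (l k) (z k)

/-- A function of the blocked variables `z = (z_{k,i})` is multi-affine if it is affine
(degree at most 1) in each single argument `z_{k,i}`. -/
def MultiAffineB {n : ℕ} (δ : Fin n → ℕ) (q : (∀ k, Fin (δ k) → ℝ) → ℝ) : Prop :=
  ∀ (k : Fin n) (i : Fin (δ k)) (z : ∀ k, Fin (δ k) → ℝ) (s t θ : ℝ),
    q (Function.update z k (Function.update (z k) i (θ * s + (1 - θ) * t)))
      = θ * q (Function.update z k (Function.update (z k) i s))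
        + (1 - θ) * q (Function.update z k (Function.update (z k) i t))

/-- `z ≅ z'` : each block of `z` is a permutation of the corresponding block of `z'`. -/
def BlockRel {n : ℕ} (δ : Fin n → ℕ) (z z' : ∀ k, Fin (δ k) → ℝ) : Prop :=
  ∀ k, ∃ π : Equiv.Perm (Fin (δ k)), ∀ i, z k i = z' k (π i)


/-- Euclidean dot product on `ℝ^n`. -/
def dotp {n : ℕ} (u x : Fin n → ℝ) : ℝ := ∑ k, u k * x k

/-- The lifted linear form: for `w ∈ ℝ^n`, `w' · z = ∑_k ∑_i (w k / δ k) * z k i`. -/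
noncomputable def aLift {n : ℕ} (δ : Fin n → ℕ) (w : Fin n → ℝ)
    (z : ∀ k, Fin (δ k) → ℝ) : ℝ :=
  ∑ k, ∑ i : Fin (δ k), (w k / (δ k : ℝ)) * z k i

/-- The canonical representative of the equivalence class of vertices of `R'` whose
`k`-th block has exactly `ℓ k` coordinates equal to `hi k`. -/
noncomputable def vrep {n : ℕ} (δ : Fin n → ℕ) (lo hi : Fin n → ℝ)
    (ℓ : ∀ k, Fin (δ k + 1)) (k : Fin n) (i : Fin (δ k)) : ℝ :=
  if (i : ℕ) < (ℓ k : ℕ) then hi k else lo k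

/-- The vertex of `V' = ∏_k {lo k, hi k}^{δ k}` encoded by the choice function `s`. -/
noncomputable def vert {n : ℕ} (δ : Fin n → ℕ) (lo hi : Fin n → ℝ)
    (s : ∀ k, Fin (δ k) → Bool) (k : Fin n) (i : Fin (δ k)) : ℝ :=
  if s k i then hi k else lo k

/-- The count vector of a vertex: `countOf δ s k` is the number of coordinates of the
`k`-th block equal to the upper bound, i.e. `l_k(v)`; it determines the equivalence
class of the vertex under the per-block permutation relation. -/
def countOf {n : ℕ} (δ : Fin n → ℕ) (s : ∀ k, Fin (δ k) → Bool) (k : Fin n) :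
    Fin (δ k + 1) :=
  ⟨(Finset.univ.filter fun i => s k i = true).card,
    Nat.lt_succ_of_le (le_trans (Finset.card_filter_le _ _) (by simp))⟩


section AuxSplit

lemma card_filter_val_lt' (d m : ℕ) (hm : m ≤ d) :
    ((Finset.univ : Finset (Fin d)).filter fun i : Fin d => (i : ℕ) < m).card = m := by
  rw [← Fintype.card_subtype]
  have e : {i : Fin d // (i : ℕ) < m} ≃ Fin m :=
    { toFun := fun i => ⟨i.1, i.2⟩
      invFun := fun j => ⟨⟨j, lt_of_lt_of_le j.2 hm⟩, j.2⟩
      left_inv := fun i => by ext; rfl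
      right_inv := fun j => rfl }
  rw [Fintype.card_congr e, Fintype.card_fin]

lemma card_subtype_boolfun' (d m : ℕ) :
    Fintype.card {t : Fin d → Bool // (Finset.univ.filter fun i => t i = true).card = m}
      = d.choose m := by
  have e : {t : Fin d → Bool // (Finset.univ.filter fun i => t i = true).card = m}
      ≃ {A : Finset (Fin d) // A ∈ Finset.powersetCard m Finset.univ} :=
    { toFun := fun t => ⟨Finset.univ.filter fun i => t.1 i = true, by
        rw [Finset.mem_powersetCard]; exact ⟨Finset.filter_subset _ _, t.2⟩⟩
      invFun := fun A => ⟨fun i => decide (i ∈ A.1), by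
        have : (Finset.univ.filter fun i => decide (i ∈ A.1) = true) = A.1 := by
          ext i; simp
        rw [this]; exact (Finset.mem_powersetCard.mp A.2).2⟩
      left_inv := fun t => by
        ext i : 2
        cases h : t.1 i <;> simp [h]
      right_inv := fun A => by
        ext i
        simp }
  rw [Fintype.card_congr e, Fintype.card_coe, Finset.card_powersetCard, Finset.card_univ,
    Fintype.card_fin]

lemma fiber_card' {n : ℕ} (δ : Fin n → ℕ) (ℓ : ∀ k, Fin (δ k + 1)) :
    (Finset.univ.filter fun s : ∀ k, Fin (δ k) → Bool => countOf δ s = ℓ).card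
      = ∏ k, (δ k).choose (ℓ k) := by
  rw [← Fintype.card_subtype]
  have e : {s : ∀ k, Fin (δ k) → Bool // countOf δ s = ℓ}
      ≃ ∀ k, {t : Fin (δ k) → Bool //
          (Finset.univ.filter fun i => t i = true).card = (ℓ k : ℕ)} := by
    refine (Equiv.subtypeEquivRight ?_).trans (Equiv.subtypePiEquivPi)
    intro s
    constructor
    · intro h k; rw [← h]; rfl
    · intro h; funext k; exact Fin.ext (h k)
  rw [Fintype.card_congr e, Fintype.card_pi]
  exact Finset.prod_congr rfl fun k _ => card_subtype_boolfun' _ _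

lemma sum_fiber' {n : ℕ} (δ : Fin n → ℕ) (G : (∀ k, Fin (δ k + 1)) → ℝ) :
    ∑ s : ∀ k, Fin (δ k) → Bool, G (countOf δ s)
      = ∑ ℓ : ∀ k, Fin (δ k + 1), (∏ k, ((δ k).choose (ℓ k) : ℝ)) * G ℓ := by
  rw [← Finset.sum_fiberwise Finset.univ (countOf δ) (fun s => G (countOf δ s))]
  refine Finset.sum_congr rfl fun ℓ _ => ?_
  rw [Finset.sum_congr rfl (fun s hs => by rw [(Finset.mem_filter.mp hs).2]),
    Finset.sum_const, fiber_card']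
  push_cast [nsmul_eq_mul]
  ring

lemma card_filter_comp' {d : ℕ} (f : Fin d → Bool) (e : Equiv.Perm (Fin d)) :
    (Finset.univ.filter fun i => f (e i) = true).card
      = (Finset.univ.filter fun i => f i = true).card := by
  rw [← Fintype.card_subtype, ← Fintype.card_subtype]
  exact Fintype.card_congr (e.subtypeEquiv fun i => Iff.rfl)

lemma blockRel_vert_vrep' {n : ℕ} (δ : Fin n → ℕ) (lo hi : Fin n → ℝ)
    (s : ∀ k, Fin (δ k) → Bool) :
    BlockRel δ (vert δ lo hi s) (vrep δ lo hi (countOf δ s)) := by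
  intro k
  classical
  set m : ℕ := (countOf δ s k : ℕ) with hm
  have hmle : m ≤ δ k := Nat.lt_succ_iff.mp (countOf δ s k).2
  have hcP : Fintype.card {i : Fin (δ k) // s k i = true} = m := by
    rw [Fintype.card_subtype]; rfl
  have hcQ : Fintype.card {i : Fin (δ k) // (i : ℕ) < m} = m := by
    rw [Fintype.card_subtype]; exact card_filter_val_lt' _ _ hmle
  have hcP' : Fintype.card {i : Fin (δ k) // ¬ s k i = true} = δ k - m := by
    rw [Fintype.card_subtype_compl, hcP, Fintype.card_fin]
  have hcQ' : Fintype.card {i : Fin (δ k) // ¬ (i : ℕ) < m} = δ k - m := by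
    rw [Fintype.card_subtype_compl, hcQ, Fintype.card_fin]
  set e1 : {i : Fin (δ k) // s k i = true} ≃ {i : Fin (δ k) // (i : ℕ) < m} :=
    Fintype.equivOfCardEq (hcP.trans hcQ.symm)
  set e2 : {i : Fin (δ k) // ¬ s k i = true} ≃ {i : Fin (δ k) // ¬ (i : ℕ) < m} :=
    Fintype.equivOfCardEq (hcP'.trans hcQ'.symm)
  refine ⟨Equiv.subtypeCongr e1 e2, fun i => ?_⟩
  by_cases h : s k i = true
  · have hπ : Equiv.subtypeCongr e1 e2 i = (e1 ⟨i, h⟩ : Fin (δ k)) := by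
      simp only [Equiv.subtypeCongr, Equiv.trans_apply, Equiv.sumCongr_apply]
      rw [Equiv.sumCompl_symm_apply_of_pos (p := fun x => s k x = true) h]; rfl
    rw [hπ]
    simp only [vert, vrep]
    rw [if_pos h, if_pos (e1 ⟨i, h⟩).2]
  · have hπ : Equiv.subtypeCongr e1 e2 i = (e2 ⟨i, h⟩ : Fin (δ k)) := by
      simp only [Equiv.subtypeCongr, Equiv.trans_apply, Equiv.sumCongr_apply]
      rw [Equiv.sumCompl_symm_apply_of_neg (p := fun x => s k x = true) h]; rfl
    rw [hπ]
    simp only [vert, vrep]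
    rw [if_neg h, if_neg (e2 ⟨i, h⟩).2]

lemma aLift_blockRel' {n : ℕ} (δ : Fin n → ℕ) (w : Fin n → ℝ)
    {z z' : ∀ k, Fin (δ k) → ℝ} (h : BlockRel δ z z') :
    aLift δ w z = aLift δ w z' := by
  unfold aLift
  refine Finset.sum_congr rfl fun k _ => ?_
  obtain ⟨π, hπ⟩ := h k
  rw [← Finset.mul_sum, ← Finset.mul_sum]
  congr 1
  rw [Finset.sum_congr rfl fun i _ => hπ i]
  exact Equiv.sum_comp π (z' k)

lemma aLift_sum' {n : ℕ} (δ : Fin n → ℕ) (w : Fin n → ℝ) {α : Type*} [Fintype α]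
    (f : α → ∀ k, Fin (δ k) → ℝ) (coef : α → ℝ) :
    aLift δ w (fun k j => ∑ s, coef s * f s k j) = ∑ s, coef s * aLift δ w (f s) := by
  unfold aLift
  simp only [Finset.mul_sum]
  refine Eq.trans (Finset.sum_congr rfl fun k _ => Finset.sum_comm) ?_
  refine Eq.trans Finset.sum_comm ?_
  exact Finset.sum_congr rfl fun s _ => Finset.sum_congr rfl fun k _ =>
    Finset.sum_congr rfl fun j _ => by ring

end AuxSplit

/-- Uniform splitting preserves feasibility and objective value: if `z` is feasible
for the reduced LP (D2) (indexed by the equivalence classes `v̄ ∈ V̄'`, encoded by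
count vectors `ℓ`), then `y`, defined by `y_v = z_{v̄}/n(v̄)` for `v ∈ v̄` where
`n(v̄) = ∏_k binom(δ_k, ℓ_k)` is the number of vertices in the class `v̄`, is feasible
for the primal LP (D1) — including the difference-form constraints `e_{k,l}` — and the
objective values agree: `∑_v y_v q(v) = ∑_{v̄} z_{v̄} q(v̄)`. -/
theorem stmt_14 {n mI mJ : ℕ} (δ : Fin n → ℕ) (hδ : ∀ k, 1 ≤ δ k)
    (lo hi : Fin n → ℝ) (hlt : ∀ k, lo k < hi k)
    (p : (Fin n → ℝ) → ℝ) (q : (∀ k, Fin (δ k) → ℝ) → ℝ)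
    (hqma : MultiAffineB δ q)
    (hqsym : ∀ z z' : ∀ k, Fin (δ k) → ℝ, BlockRel δ z z' → q z = q z')
    (hqdiag : ∀ x : Fin n → ℝ, q (fun k _ => x k) = p x)
    (a : Fin mI → Fin n → ℝ) (b : Fin mI → ℝ)
    (c : Fin mJ → Fin n → ℝ) (d : Fin mJ → ℝ)
    (z : (∀ k, Fin (δ k + 1)) → ℝ)
    (hz0 : ∀ ℓ : ∀ k, Fin (δ k + 1), 0 ≤ z ℓ)
    (hz1 : ∑ ℓ : ∀ k, Fin (δ k + 1), z ℓ = 1)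
    (hzA : ∀ i, ∑ ℓ : ∀ k, Fin (δ k + 1), z ℓ * aLift δ (a i) (vrep δ lo hi ℓ) ≤ b i)
    (hzC : ∀ j, ∑ ℓ : ∀ k, Fin (δ k + 1), z ℓ * aLift δ (c j) (vrep δ lo hi ℓ) = d j)
    (y : (∀ k, Fin (δ k) → Bool) → ℝ)
    (hy : ∀ s : ∀ k, Fin (δ k) → Bool,
      y s = z (countOf δ s) / ∏ k, ((δ k).choose (countOf δ s k) : ℝ)) :
    (∀ s, 0 ≤ y s) ∧
    (∑ s : ∀ k, Fin (δ k) → Bool, y s = 1) ∧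
    (∀ i, aLift δ (a i)
      (fun k j => ∑ s : ∀ k, Fin (δ k) → Bool, y s * vert δ lo hi s k j) ≤ b i) ∧
    (∀ j', aLift δ (c j')
      (fun k j => ∑ s : ∀ k, Fin (δ k) → Bool, y s * vert δ lo hi s k j) = d j') ∧
    (∀ (k : Fin n) (l : ℕ) (h : l + 1 < δ k),
      (∑ s : ∀ k, Fin (δ k) → Bool, y s * vert δ lo hi s k ⟨l, by omega⟩)
        - (∑ s : ∀ k, Fin (δ k) → Bool, y s * vert δ lo hi s k ⟨l + 1, h⟩) = 0) ∧
    (∑ s : ∀ k, Fin (δ k) → Bool, y s * q (vert δ lo hi s)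
      = ∑ ℓ : ∀ k, Fin (δ k + 1), z ℓ * q (vrep δ lo hi ℓ)) := by
  classical
  set N : (∀ k, Fin (δ k + 1)) → ℝ := fun ℓ => ∏ k, ((δ k).choose (ℓ k) : ℝ) with hN
  have hNpos : ∀ ℓ, 0 < N ℓ := fun ℓ => Finset.prod_pos fun k _ => by
    exact_mod_cast Nat.choose_pos (Nat.lt_succ_iff.mp (ℓ k).2)
  have hred : ∀ H : (∀ k, Fin (δ k) → ℝ) → ℝ,
      (∀ u u' : ∀ k, Fin (δ k) → ℝ, BlockRel δ u u' → H u = H u') →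
      ∑ s : ∀ k, Fin (δ k) → Bool, y s * H (vert δ lo hi s)
        = ∑ ℓ : ∀ k, Fin (δ k + 1), z ℓ * H (vrep δ lo hi ℓ) := by
    intro H hH
    have h1 : ∀ s : ∀ k, Fin (δ k) → Bool,
        y s * H (vert δ lo hi s)
          = (fun ℓ => z ℓ / N ℓ * H (vrep δ lo hi ℓ)) (countOf δ s) := by
      intro s
      rw [hy s, hH _ _ (blockRel_vert_vrep' δ lo hi s)]
    rw [Finset.sum_congr rfl fun s _ => h1 s,
      sum_fiber' δ (fun ℓ => z ℓ / N ℓ * H (vrep δ lo hi ℓ))]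
    refine Finset.sum_congr rfl fun ℓ _ => ?_
    have hne : N ℓ ≠ 0 := (hNpos ℓ).ne'
    show N ℓ * (z ℓ / N ℓ * H (vrep δ lo hi ℓ)) = _
    field_simp
  have hswap : ∀ (k : Fin n) (j1 j2 : Fin (δ k)),
      (∑ s : ∀ k, Fin (δ k) → Bool, y s * vert δ lo hi s k j1)
        = ∑ s : ∀ k, Fin (δ k) → Bool, y s * vert δ lo hi s k j2 := by
    intro k j1 j2
    set σ : (∀ k', Fin (δ k') → Bool) → (∀ k', Fin (δ k') → Bool) :=
      fun s => Function.update s k (s k ∘ Equiv.swap j1 j2) with hσ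
    have hσk : ∀ s, σ s k = s k ∘ Equiv.swap j1 j2 := fun s =>
      Function.update_self _ _ _
    have hσk' : ∀ s k', k' ≠ k → σ s k' = s k' := fun s k' hk =>
      Function.update_of_ne hk _ _
    have hinv : Function.Involutive σ := by
      intro s
      funext k'
      by_cases hk : k' = k
      · subst hk
        rw [hσk, hσk]
        funext i
        simp [Equiv.swap_apply_self]
      · rw [hσk' _ _ hk, hσk' _ _ hk]
    have hcount : ∀ s, countOf δ (σ s) = countOf δ s := by
      intro s
      funext k'
      apply Fin.ext
      show (Finset.univ.filter fun i => σ s k' i = true).card = _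
      by_cases hk : k' = k
      · subst hk
        rw [hσk]
        exact card_filter_comp' _ _
      · rw [hσk' _ _ hk]; rfl
    have key : ∀ s, y s * vert δ lo hi s k j2
        = y (σ s) * vert δ lo hi (σ s) k j1 := by
      intro s
      have hy' : y (σ s) = y s := by rw [hy, hy, hcount]
      have hv : vert δ lo hi (σ s) k j1 = vert δ lo hi s k j2 := by
        show (if σ s k j1 then hi k else lo k) = _
        rw [hσk]
        simp [vert, Equiv.swap_apply_left]
      rw [hy', hv]
    exact (Fintype.sum_bijective σ hinv.bijective _ _ key).symm
  refine ⟨?_, ?_, ?_, ?_, ?_, ?_⟩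
  · intro s
    rw [hy]
    exact div_nonneg (hz0 _) (le_of_lt (hNpos _))
  · have h2 := hred (fun _ => 1) (fun _ _ _ => rfl)
    simp only [mul_one] at h2
    exact h2.trans hz1
  · intro i
    rw [aLift_sum' δ (a i) (fun s => vert δ lo hi s) y,
      hred (aLift δ (a i)) (fun u u' h => aLift_blockRel' δ (a i) h)]
    exact hzA i
  · intro j'
    rw [aLift_sum' δ (c j') (fun s => vert δ lo hi s) y,
      hred (aLift δ (c j')) (fun u u' h => aLift_blockRel' δ (c j') h)]
    exact hzC j'
  · intro k l h
    rw [hswap k ⟨l, by omega⟩ ⟨l + 1, h⟩, sub_self]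
  · exact hred q hqsym
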